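/- Jacobi–Gegenbauer summation (even case): for every natural number n ≥ 2, every N ∈ ℕ, every λ ∈ ℂ and every i with 0 ≤ i ≤ N, one has Σ_{j=0}^{N−i} (−1)^{N−j−i} · binom(N−j, i) · a_j^{(N)}(λ) = α_i^{(N)}(λ). -/

import Mathlib

set_option maxHeartbeats 1000000


open Finset Polynomial

noncomputable def aC (n N j : ℕ) (l : ℂ) : ℂ :=
  (-2 : ℂ) ^ (N - j) *
    ((N.factorial : ℂ) / ((j.factorial : ℂ) * ((2 * N - 2 * j).factorial : ℂ))) *
    ∏ k ∈ Finset.Ico j N, (2 * l - 4 * (N : ℂ) + 2 * (k : ℂ) + (n : ℂ) + 1)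

noncomputable def bC (n N j : ℕ) (l : ℂ) : ℂ :=
  (-2 : ℂ) ^ (N - j) *
    ((N.factorial : ℂ) / ((j.factorial : ℂ) * ((2 * N - 2 * j + 1).factorial : ℂ))) *
    ∏ k ∈ Finset.Ico j N, (2 * l - 4 * (N : ℂ) + 2 * (k : ℂ) + (n : ℂ) - 1)

noncomputable def bCZ (n M : ℕ) (j : ℤ) (l : ℂ) : ℂ :=
  if 0 ≤ j ∧ j ≤ (M : ℤ) then bC n M j.toNat l else 0

noncomputable def alphaC (n N i : ℕ) (l : ℂ) : ℂ :=
  (-1 : ℂ) ^ i * 2 ^ N * ((N.factorial : ℂ) / ((2 * N).factorial : ℂ)) * (N.choose i : ℂ) *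
    (∏ k ∈ Finset.Icc (i + 1) N, (2 * l + (n : ℂ) - 2 * (k : ℂ))) *
    ∏ k ∈ Finset.Icc 1 i, (2 * l + (n : ℂ) - 2 * (k : ℂ) - 2 * (N : ℂ) + 1)

noncomputable def betaC (n N i : ℕ) (l : ℂ) : ℂ :=
  (-1 : ℂ) ^ i * 2 ^ N * ((N.factorial : ℂ) / ((2 * N + 1).factorial : ℂ)) * (N.choose i : ℂ) *
    (∏ k ∈ Finset.Icc (i + 1) N, (2 * l + (n : ℂ) - 2 * (k : ℂ))) *
    ∏ k ∈ Finset.Icc 1 i, (2 * l + (n : ℂ) - 2 * (k : ℂ) - 2 * (N : ℂ) - 1)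

noncomputable def gammaC (n N i : ℕ) (l p : ℂ) : ℂ :=
  (-1 : ℂ) ^ i * 2 ^ N *
    ((N.factorial : ℂ) / (((N : ℂ) + 1) * ((2 * N + 1).factorial : ℂ))) *
    ((N + 1).choose i : ℂ) *
    ((l + p - 2 * (N : ℂ) - 1) * ((N : ℂ) + 1) * (2 * l + (n : ℂ) - 2 * (i : ℂ)) +
      (l + (n : ℂ) - p) * (2 * (N : ℂ) + 1) * ((N : ℂ) - (i : ℂ) + 1)) *
    (∏ k ∈ Finset.Icc (i + 1) N, (2 * l + (n : ℂ) - 2 * (k : ℂ))) *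
    ∏ k ∈ Finset.Icc 1 (i - 1), (2 * l + (n : ℂ) - 2 * (k : ℂ) - 2 * (N : ℂ) - 1)

noncomputable def poch (a : ℂ) (l : ℕ) : ℂ :=
  ∏ m ∈ Finset.range l, (a + (m : ℂ))

noncomputable def dp (a : ℂ) (k : ℕ) : ℂ := ∏ m ∈ Finset.range k, (a - (m:ℂ))

lemma dp_succ' (a : ℂ) (k : ℕ) : dp a (k+1) = a * dp (a-1) k := by
  rw [dp, Finset.prod_range_succ', dp]
  rw [Finset.prod_congr rfl (fun m _ => by push_cast; ring :
    ∀ m ∈ Finset.range k, (a - ((m+1:ℕ):ℂ)) = (a - 1 - (m:ℂ)))]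
  simp [mul_comm]

lemma dp_half' (a : ℕ) : ∀ r : ℕ,
    (4:ℂ)^r * ((a+r).factorial : ℂ) * ((2*a).factorial : ℂ) * dp ((a:ℂ)+(r:ℂ) - 1/2) r
      = ((2*(a+r)).factorial : ℂ) * (a.factorial : ℂ) := by
  intro r
  induction r with
  | zero => simp [dp]; ring
  | succ r ih =>
    have h2 : dp ((a:ℂ)+((r+1):ℂ) - 1/2) (r+1) = ((a:ℂ)+(r:ℂ)+1/2) * dp ((a:ℂ)+(r:ℂ) - 1/2) r := by
      rw [dp_succ']
      congr 1
      · push_cast; ring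
      · congr 1; push_cast; ring
    rw [show a + (r+1) = (a+r)+1 from rfl, show 2*((a+r)+1) = (2*(a+r)+1)+1 from by ring,
      Nat.factorial_succ, Nat.factorial_succ, Nat.factorial_succ]
    push_cast at h2 ⊢
    rw [h2]
    linear_combination (4 * ((a:ℂ)+r+1) * ((a:ℂ)+r+1/2)) * ih

lemma term_eq (n i s t : ℕ) (l : ℂ) :
    (-1:ℂ)^s * ((i+s).choose i : ℂ) * aC n (i+s+t) t l
      = ((-1:ℂ)^i * 2^((s+t)+(i+s+t)) * ((i+s+t).factorial:ℂ)^2 /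
          ((i.factorial:ℂ) * ((s+t).factorial:ℂ) * ((2*(i+s+t)).factorial:ℂ)) *
          ∏ k ∈ Finset.Icc 1 i, (2*l + (n:ℂ) - 2*(k:ℂ) - 2*((i+s+t:ℕ):ℂ) + 1)) *
        (((s+t).choose s : ℂ) * dp ((2*l + (n:ℂ) - 2*((i+s+t:ℕ):ℂ) - 2*(i:ℂ) - 1)/2) s *
          dp (((i+s+t:ℕ):ℂ) - 1/2) t) := by
  rw [aC]
  rw [show i+s+t-t = i+s from by omega, show 2*(i+s+t)-2*t = 2*(i+s) from by omega]
  -- split product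
  rw [← Finset.prod_Ico_consecutive _ (show t ≤ s+t by omega) (show s+t ≤ i+s+t by omega)]
  -- left chunk = 2^s * dp X s
  have hA : ∏ k ∈ Finset.Ico t (s+t), (2 * l - 4 * ((i+s+t:ℕ) : ℂ) + 2 * (k : ℂ) + (n : ℂ) + 1)
      = 2^s * dp ((2*l + (n:ℂ) - 2*((i+s+t:ℕ):ℂ) - 2*(i:ℂ) - 1)/2) s := by
    rw [Finset.prod_Ico_eq_prod_range, show s+t-t = s from by omega, ← Finset.prod_range_reflect]
    have : ∀ u ∈ Finset.range s, (2 * l - 4 * ((i+s+t:ℕ) : ℂ) + 2 * ((t + (s-1-u) : ℕ) : ℂ) + (n : ℂ) + 1)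
        = 2 * ((2*l + (n:ℂ) - 2*((i+s+t:ℕ):ℂ) - 2*(i:ℂ) - 1)/2 - (u:ℂ)) := by
      intro u hu
      rw [Finset.mem_range] at hu
      rw [show t + (s - 1 - u) = s + t - (u+1) from by omega, Nat.cast_sub (by omega)]
      push_cast
      ring
    rw [Finset.prod_congr rfl this, Finset.prod_mul_distrib, Finset.prod_const,
      Finset.card_range, dp]
  -- right chunk = P_i
  have hB : ∏ k ∈ Finset.Ico (s+t) (i+s+t), (2 * l - 4 * ((i+s+t:ℕ) : ℂ) + 2 * (k : ℂ) + (n : ℂ) + 1)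
      = ∏ k ∈ Finset.Icc 1 i, (2*l + (n:ℂ) - 2*(k:ℂ) - 2*((i+s+t:ℕ):ℂ) + 1) := by
    rw [show Finset.Icc 1 i = Finset.Ico 1 (i+1) from by rw [Finset.Ico_add_one_right_eq_Icc]]
    rw [Finset.prod_Ico_eq_prod_range, Finset.prod_Ico_eq_prod_range]
    rw [show i+s+t-(s+t) = i from by omega, show i+1-1 = i from by omega,
      ← Finset.prod_range_reflect]
    refine Finset.prod_congr rfl fun u hu => ?_
    rw [Finset.mem_range] at hu
    rw [show s + t + (i - 1 - u) = i+s+t - (u+1) from by omega, Nat.cast_sub (by omega)]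
    push_cast
    ring
  have hY : dp (((i+s+t:ℕ):ℂ) - 1/2) t
      = ((2*(i+s+t)).factorial : ℂ) * ((i+s).factorial:ℂ) /
        ((2:ℂ)^(2*t) * ((i+s+t).factorial:ℂ) * ((2*(i+s)).factorial:ℂ)) := by
    rw [show (2:ℂ)^(2*t) = 4^t from by rw [show (4:ℂ) = 2^2 from by norm_num, ← pow_mul]]
    have h := dp_half' (i+s) t
    have hc : ((i+s:ℕ):ℂ) + (t:ℂ) - 1/2 = ((i+s+t:ℕ):ℂ) - 1/2 := by push_cast; ring
    rw [hc] at h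
    have f5 : ((i+s+t).factorial:ℂ) ≠ 0 := Nat.cast_ne_zero.2 (Nat.factorial_ne_zero _)
    have f7 : ((2*(i+s)).factorial:ℂ) ≠ 0 := Nat.cast_ne_zero.2 (Nat.factorial_ne_zero _)
    rw [eq_div_iff (mul_ne_zero (mul_ne_zero (pow_ne_zero _ (by norm_num)) f5) f7)]
    linear_combination h
  rw [hA, hB, hY]
  rw [Nat.cast_choose ℂ (show i ≤ i+s by omega), Nat.cast_choose ℂ (show s ≤ s+t by omega),
    show i+s-i = s from by omega, show s+t-s = t from by omega]
  have fact_ne : ∀ m:ℕ, ((m.factorial : ℂ)) ≠ 0 := fun m => Nat.cast_ne_zero.2 (Nat.factorial_ne_zero m)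
  set P := ∏ k ∈ Finset.Icc 1 i, (2*l + (n:ℂ) - 2*(k:ℂ) - 2*((i+s+t:ℕ):ℂ) + 1) with hP
  set D := dp ((2*l + (n:ℂ) - 2*((i+s+t:ℕ):ℂ) - 2*(i:ℂ) - 1)/2) s with hD
  rw [pow_add (-2:ℂ) i s]
  rw [show ((-2):ℂ)^i = (-1)^i * 2^i from by rw [show ((-2):ℂ) = -1*2 from by norm_num, mul_pow]]
  rcases Nat.even_or_odd s with hpar | hpar
  · rw [hpar.neg_one_pow, hpar.neg_pow]
    have hden : ((i.factorial:ℂ) * (s.factorial:ℂ) * (t.factorial:ℂ) *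
        ((s+t).factorial:ℂ) * ((i+s+t).factorial:ℂ) * ((2*(i+s)).factorial:ℂ) *
        ((2*(i+s+t)).factorial:ℂ) * (2:ℂ)^(2*t)) ≠ 0 := by
      refine mul_ne_zero (mul_ne_zero (mul_ne_zero (mul_ne_zero (mul_ne_zero (mul_ne_zero
        (mul_ne_zero ?_ ?_) ?_) ?_) ?_) ?_) ?_) ?_ <;>
        first
          | exact fact_ne _
          | exact pow_ne_zero _ two_ne_zero
    apply mul_right_cancel₀ hden
    field_simp [fact_ne]
    ring
  · rw [hpar.neg_one_pow, hpar.neg_pow]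
    have hden : ((i.factorial:ℂ) * (s.factorial:ℂ) * (t.factorial:ℂ) *
        ((s+t).factorial:ℂ) * ((i+s+t).factorial:ℂ) * ((2*(i+s)).factorial:ℂ) *
        ((2*(i+s+t)).factorial:ℂ) * (2:ℂ)^(2*t)) ≠ 0 := by
      refine mul_ne_zero (mul_ne_zero (mul_ne_zero (mul_ne_zero (mul_ne_zero (mul_ne_zero
        (mul_ne_zero ?_ ?_) ?_) ?_) ?_) ?_) ?_) ?_ <;>
        first
          | exact fact_ne _
          | exact pow_ne_zero _ two_ne_zero
    apply mul_right_cancel₀ hden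
    field_simp [fact_ne]
    ring

lemma dp_smeval (a : ℂ) (k : ℕ) : (descPochhammer ℤ k).smeval a = dp a k := by
  induction k with
  | zero => simp [dp, descPochhammer_zero, Polynomial.smeval_one]
  | succ k ih =>
    rw [descPochhammer_succ_right, Polynomial.smeval_mul, ih]
    have h : (X - ((k:ℕ) : ℤ[X])).smeval a = a - k := by
      simp [Polynomial.smeval_sub, Polynomial.smeval_X, Polynomial.smeval_natCast]
    rw [h, dp, dp, Finset.prod_range_succ]

lemma dpV (X Y : ℂ) (M : ℕ) :
    ∑ s ∈ range (M+1), (M.choose s : ℂ) * dp X s * dp Y (M-s) = dp (X+Y) M := by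
  have h := Ring.descPochhammer_smeval_add (R := ℂ) (r := X) (s := Y) M (Commute.all X Y)
  rw [dp_smeval, Finset.Nat.sum_antidiagonal_eq_sum_range_succ_mk] at h
  rw [h]
  refine Finset.sum_congr rfl fun s hs => ?_
  rw [dp_smeval, dp_smeval]; ring

theorem jacobi_gegenbauer_sum_even (n : ℕ) (hn : 2 ≤ n) (N : ℕ) (l : ℂ)
    (i : ℕ) (hi : i ≤ N) :
    ∑ j ∈ Finset.range (N - i + 1),
        (-1 : ℂ) ^ (N - j - i) * ((N - j).choose i : ℂ) * aC n N j l
      = alphaC n N i l := by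
  have fact_ne : ∀ m:ℕ, ((m.factorial : ℂ)) ≠ 0 := fun m => Nat.cast_ne_zero.2 (Nat.factorial_ne_zero m)
  have key : ∀ j ∈ Finset.range (N - i + 1),
      (-1 : ℂ) ^ (N - j - i) * ((N - j).choose i : ℂ) * aC n N j l
        = ((-1:ℂ)^i * 2^((N-i)+N) * (N.factorial:ℂ)^2 /
            ((i.factorial:ℂ) * ((N-i).factorial:ℂ) * ((2*N).factorial:ℂ)) *
            ∏ k ∈ Finset.Icc 1 i, (2*l + (n:ℂ) - 2*(k:ℂ) - 2*(N:ℂ) + 1)) *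
          (((N-i).choose (N-i-j) : ℂ) * dp ((2*l + (n:ℂ) - 2*(N:ℂ) - 2*(i:ℂ) - 1)/2) (N-i-j) *
            dp ((N:ℂ) - 1/2) j) := by
    intro j hj
    rw [Finset.mem_range] at hj
    obtain ⟨s, hs⟩ : ∃ s, N = i + s + j := ⟨N - i - j, by omega⟩
    subst hs
    rw [show i+s+j - j - i = s from by omega, show i+s+j-j = i+s from by omega,
      show i+s+j-i-j = s from by omega, show i+s+j-i = s+j from by omega]
    exact term_eq n i s j l
  rw [Finset.sum_congr rfl key, ← Finset.mul_sum]
  have hrefl : (∑ j ∈ Finset.range (N-i+1),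
      (((N-i).choose (N-i-j):ℂ) * dp ((2*l + (n:ℂ) - 2*(N:ℂ) - 2*(i:ℂ) - 1)/2) (N-i-j) *
        dp ((N:ℂ) - 1/2) j))
      = dp ((2*l + (n:ℂ) - 2*(N:ℂ) - 2*(i:ℂ) - 1)/2 + ((N:ℂ) - 1/2)) (N-i) := by
    rw [← dpV ((2*l + (n:ℂ) - 2*(N:ℂ) - 2*(i:ℂ) - 1)/2) ((N:ℂ) - 1/2) (N-i),
      ← Finset.sum_range_reflect (fun s => (((N-i).choose s : ℂ) *
        dp ((2*l + (n:ℂ) - 2*(N:ℂ) - 2*(i:ℂ) - 1)/2) s * dp ((N:ℂ) - 1/2) ((N-i)-s))) (N-i+1)]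
    refine Finset.sum_congr rfl fun j hj => ?_
    rw [Finset.mem_range] at hj
    beta_reduce
    rw [show N-i+1-1-j = N-i-j from by omega, show N-i-(N-i-j) = j from by omega]
  rw [hrefl]
  have hQ : ∏ k ∈ Finset.Icc (i+1) N, (2*l + (n:ℂ) - 2*(k:ℂ))
      = 2^(N-i) * dp ((2*l + (n:ℂ) - 2*(N:ℂ) - 2*(i:ℂ) - 1)/2 + ((N:ℂ) - 1/2)) (N-i) := by
    rw [show Finset.Icc (i+1) N = Finset.Ico (i+1) (N+1) from by rw [Finset.Ico_add_one_right_eq_Icc],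
      Finset.prod_Ico_eq_prod_range, show N+1-(i+1) = N-i from by omega]
    have : ∀ u ∈ Finset.range (N-i), (2*l + (n:ℂ) - 2*(((i+1+u:ℕ)):ℂ))
        = 2 * (((2*l + (n:ℂ) - 2*(N:ℂ) - 2*(i:ℂ) - 1)/2 + ((N:ℂ) - 1/2)) - (u:ℂ)) := by
      intro u hu
      push_cast
      ring
    rw [Finset.prod_congr rfl this, Finset.prod_mul_distrib, Finset.prod_const,
      Finset.card_range, dp]
  rw [alphaC, hQ, Nat.cast_choose ℂ hi]
  field_simp [fact_ne]
  ring
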